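/- For all real η ≠ 0, setting Υ(x₀,x₁) := cos(η x₀)(cos(η x₀) cosh(η x₁) + sinh(η x₁)), the functions π₀₁(x) = −(tanh(η x₂)/η) Υ(x₀,x₁), π₀₂(x) = (tanh(η x₁)/η) Υ(x₀,x₁), π₁₂(x) = (tan(η x₀)/η) Υ(x₀,x₁), extended antisymmetrically by π_ba = −π_ab and π_aa = 0, satisfy the Jacobi identity for a Poisson bivector: for every x ∈ ℝ³ with cos(η x₀) ≠ 0, Σ_{l=0}^{2} ( π_{0l}(x) ∂_l π_{12}(x) + π_{1l}(x) ∂_l π_{20}(x) + π_{2l}(x) ∂_l π_{01}(x) ) = 0, where ∂_l denotes the partial derivative in the variable x_l. Hence these functions define the Poisson-subgroup Poisson homogeneous structure on AdS₃ associated with the double D(sl(2,ℝ)). -/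

import Mathlib

open Real

/-- `Υ(x₀,x₁) = cos(ηx₀)(cos(ηx₀)cosh(ηx₁) + sinh(ηx₁))`. -/
noncomputable def Ups (η : ℝ) (x : Fin 3 → ℝ) : ℝ :=
  Real.cos (η * x 0) * (Real.cos (η * x 0) * Real.cosh (η * x 1) + Real.sinh (η * x 1))

/-- `π₀₁` for the Poisson-subgroup Poisson structure on AdS₃. -/
noncomputable def rho01 (η : ℝ) (x : Fin 3 → ℝ) : ℝ :=
  -(Real.tanh (η * x 2) / η) * Ups η x

/-- `π₀₂` for the Poisson-subgroup Poisson structure on AdS₃. -/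
noncomputable def rho02 (η : ℝ) (x : Fin 3 → ℝ) : ℝ :=
  (Real.tanh (η * x 1) / η) * Ups η x

/-- `π₁₂` for the Poisson-subgroup Poisson structure on AdS₃. -/
noncomputable def rho12 (η : ℝ) (x : Fin 3 → ℝ) : ℝ :=
  (Real.tan (η * x 0) / η) * Ups η x

/-- The skew-symmetric bivector matrix `π_ab` of the Poisson-subgroup structure. -/
noncomputable def piSubgroupAdS (η : ℝ) (a b : Fin 3) (x : Fin 3 → ℝ) : ℝ :=
  !![0, rho01 η x, rho02 η x;
     -(rho01 η x), 0, rho12 η x;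
     -(rho02 η x), -(rho12 η x), 0] a b

lemma hasDerivAt_tanh' (u : ℝ) :
    HasDerivAt Real.tanh ((Real.cosh u * Real.cosh u - Real.sinh u * Real.sinh u) / Real.cosh u ^ 2) u := by
  have h := (Real.hasDerivAt_sinh u).div (Real.hasDerivAt_cosh u) (ne_of_gt (Real.cosh_pos u))
  have : Real.tanh = fun y => Real.sinh y / Real.cosh y := by
    funext y; exact Real.tanh_eq_sinh_div_cosh y
  rw [this]
  exact h


/-- For all real `η ≠ 0`, the bivector components built from
`Υ(x₀,x₁) = cos(ηx₀)(cos(ηx₀)cosh(ηx₁) + sinh(ηx₁))` satisfy the Jacobi identity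
`Σ_l (π₀ₗ ∂ₗπ₁₂ + π₁ₗ ∂ₗπ₂₀ + π₂ₗ ∂ₗπ₀₁) = 0` at every point with `cos(ηx₀) ≠ 0`,
hence define the Poisson-subgroup Poisson homogeneous structure on AdS₃ associated
with the double `D(sl(2,ℝ))`. -/
theorem poisson_subgroup_AdS_jacobi (η : ℝ) (hη : η ≠ 0) :
    ∀ x : Fin 3 → ℝ, Real.cos (η * x 0) ≠ 0 →
      ∑ l : Fin 3,
        (piSubgroupAdS η 0 l x * fderiv ℝ (piSubgroupAdS η 1 2) x (Pi.single l 1) +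
         piSubgroupAdS η 1 l x * fderiv ℝ (piSubgroupAdS η 2 0) x (Pi.single l 1) +
         piSubgroupAdS η 2 l x * fderiv ℝ (piSubgroupAdS η 0 1) x (Pi.single l 1)) = 0 := by
  intro x hx
  set e : Fin 3 → (Fin 3 → ℝ) →L[ℝ] ℝ := fun i => ContinuousLinearMap.proj i with he
  -- coordinate functions
  have hc : ∀ i : Fin 3, HasFDerivAt (fun y : Fin 3 → ℝ => η * y i) (η • e i) x := by
    intro i
    exact ((ContinuousLinearMap.proj i : (Fin 3 → ℝ) →L[ℝ] ℝ).hasFDerivAt (x := x)).const_mul η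
  have hcos0 : HasFDerivAt (fun y : Fin 3 → ℝ => Real.cos (η * y 0))
      ((-Real.sin (η * x 0)) • (η • e 0)) x :=
    (Real.hasDerivAt_cos (η * x 0)).comp_hasFDerivAt (h₂ := Real.cos) x (hc 0)
  have hcosh1 : HasFDerivAt (fun y : Fin 3 → ℝ => Real.cosh (η * y 1))
      ((Real.sinh (η * x 1)) • (η • e 1)) x :=
    (Real.hasDerivAt_cosh (η * x 1)).comp_hasFDerivAt (h₂ := Real.cosh) x (hc 1)
  have hsinh1 : HasFDerivAt (fun y : Fin 3 → ℝ => Real.sinh (η * y 1))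
      ((Real.cosh (η * x 1)) • (η • e 1)) x :=
    (Real.hasDerivAt_sinh (η * x 1)).comp_hasFDerivAt (h₂ := Real.sinh) x (hc 1)
  have htanh1 : HasFDerivAt (fun y : Fin 3 → ℝ => Real.tanh (η * y 1))
      (((Real.cosh (η * x 1) * Real.cosh (η * x 1) - Real.sinh (η * x 1) * Real.sinh (η * x 1)) / Real.cosh (η * x 1) ^ 2) • (η • e 1)) x :=
    (hasDerivAt_tanh' (η * x 1)).comp_hasFDerivAt (h₂ := Real.tanh) x (hc 1)
  have htanh2 : HasFDerivAt (fun y : Fin 3 → ℝ => Real.tanh (η * y 2))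
      (((Real.cosh (η * x 2) * Real.cosh (η * x 2) - Real.sinh (η * x 2) * Real.sinh (η * x 2)) / Real.cosh (η * x 2) ^ 2) • (η • e 2)) x :=
    (hasDerivAt_tanh' (η * x 2)).comp_hasFDerivAt (h₂ := Real.tanh) x (hc 2)
  have htan0 : HasFDerivAt (fun y : Fin 3 → ℝ => Real.tan (η * y 0))
      ((1 / Real.cos (η * x 0) ^ 2) • (η • e 0)) x :=
    (Real.hasDerivAt_tan hx).comp_hasFDerivAt (h₂ := Real.tan) x (hc 0)
  -- Ups
  have hU : HasFDerivAt (Ups η) _ x := hcos0.mul ((hcos0.mul hcosh1).add hsinh1)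
  -- rho's
  have hp2 : HasFDerivAt (fun y : Fin 3 → ℝ => -(Real.tanh (η * y 2) / η)) _ x :=
    (((hasDerivAt_tanh' (η * x 2)).div_const η).neg).comp_hasFDerivAt (f := fun y : Fin 3 → ℝ => η * y 2) x (hc 2)
  have hp1 : HasFDerivAt (fun y : Fin 3 → ℝ => Real.tanh (η * y 1) / η) _ x :=
    ((hasDerivAt_tanh' (η * x 1)).div_const η).comp_hasFDerivAt (h₂ := fun u => Real.tanh u / η) x (hc 1)
  have hp0 : HasFDerivAt (fun y : Fin 3 → ℝ => Real.tan (η * y 0) / η) _ x :=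
    ((Real.hasDerivAt_tan hx).div_const η).comp_hasFDerivAt (h₂ := fun u => Real.tan u / η) x (hc 0)
  have h01 : HasFDerivAt (rho01 η) _ x := hp2.mul hU
  have h02 : HasFDerivAt (rho02 η) _ x := hp1.mul hU
  have h12 : HasFDerivAt (rho12 η) _ x := hp0.mul hU
  -- identify matrix entries with rho's
  have e12 : piSubgroupAdS η 1 2 = rho12 η := by
    funext y; simp [piSubgroupAdS]
  have e20 : piSubgroupAdS η 2 0 = fun y => -(rho02 η y) := by
    funext y; simp [piSubgroupAdS]
  have e01 : piSubgroupAdS η 0 1 = rho01 η := by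
    funext y; simp [piSubgroupAdS]
  rw [e12, e20, e01, h12.fderiv, (h02.fun_neg).fderiv, h01.fderiv]
  have hval : ∀ (i l : Fin 3), (e i) (Pi.single l 1) = if l = i then 1 else 0 := by
    intro i l
    simp [he, Pi.single_apply, eq_comm]
  simp only [Fin.sum_univ_three, piSubgroupAdS, Matrix.cons_val', Matrix.cons_val_zero,
    Matrix.cons_val_one, Matrix.head_cons, Matrix.head_fin_const, Matrix.cons_val_two,
    Matrix.tail_cons, Matrix.empty_val', Matrix.cons_val_fin_one,
    ContinuousLinearMap.add_apply, ContinuousLinearMap.smul_apply, ContinuousLinearMap.neg_apply,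
    smul_eq_mul, hval]
  norm_num
  unfold rho01 rho02 rho12
  simp
  ring_nf
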